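/- Reduction of separation to blossom minimization: with the construction G* (add vertex v joined to all u ∈ V), capacities (c_e, c'_e) := (x_e, u_e − x_e) if u_e is odd and (min(x_e, u_e − x_e), ∞) if u_e is even, c_{uv} := s_u, c'_{uv} := ∞, and T := {u ∈ V : b_u odd} ∪ ({v} if ∑_u b_u is odd), the following holds: for every blossom (U,F) in G* with v ∉ U and finite β(U,F), setting W := U ∩ V, the inequality ∑_{u∈W} s_u + ∑_{e∈δ_G(W)\F'} x_e + ∑_{f∈F'} (u_f − x_f) ≥ 1 is violated by exactly 1 − β(U,F), where F' arises from F by choosing for each even-capacity edge e ∈ F the cheaper of x_e and u_e − x_e appropriately; conversely every violated inequality of this form yields a blossom of value less than 1. -/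

import Mathlib

open scoped Classical

/-- The set of edges of `E` with exactly one endpoint in `U`. -/
noncomputable def cutEdges {V : Type*} [Fintype V] [DecidableEq V]
    (E : Finset (V × V)) (U : Finset V) : Finset (V × V) :=
  E.filter (fun e => (e.1 ∈ U ∧ e.2 ∉ U) ∨ (e.1 ∉ U ∧ e.2 ∈ U))

/-- The set of edges of `E` incident to the vertex `i`. -/
noncomputable def incEdges {V : Type*} [Fintype V] [DecidableEq V]
    (E : Finset (V × V)) (i : V) : Finset (V × V) :=
  E.filter (fun e => e.1 = i ∨ e.2 = i)

/-- The set of edges of `E` with both endpoints in `W`. -/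
noncomputable def inEdges {V : Type*} [Fintype V] [DecidableEq V]
    (E : Finset (V × V)) (W : Finset V) : Finset (V × V) :=
  E.filter (fun e => e.1 ∈ W ∧ e.2 ∈ W)

/-- The edge set of the auxiliary graph `G*`: the edges of `G` (embedded via `some`)
together with an edge from every vertex of `G` to the new vertex `none`. -/
noncomputable def starEdges {V : Type*} [Fintype V] [DecidableEq V]
    (E : Finset (V × V)) : Finset (Option V × Option V) :=
  E.image (fun e => ((some e.1 : Option V), (some e.2 : Option V))) ∪
    Finset.univ.image (fun a : V => ((some a : Option V), (none : Option V)))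

/-- The capacity `c` on `G*`: `x_e` on odd-capacity edges, `min(x_e, u_e − x_e)` on
even-capacity edges, and the degree slack `s_a` on the edge from `a` to the new vertex. -/
noncomputable def starC {V : Type*} [Fintype V] [DecidableEq V]
    (E : Finset (V × V)) (b : V → ℤ) (u : V × V → ℤ) (x : V × V → ℚ) :
    Option V × Option V → WithTop ℚ
  | (some a, some a') =>
      if Odd (u (a, a')) then ((x (a, a') : ℚ) : WithTop ℚ)
      else ((min (x (a, a')) ((u (a, a') : ℚ) - x (a, a')) : ℚ) : WithTop ℚ)
  | (some a, none) => (((b a : ℚ) - (incEdges E a).sum x : ℚ) : WithTop ℚ)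
  | _ => 0

/-- The capacity `c'` on `G*`: `u_e − x_e` on odd-capacity edges and `∞` elsewhere. -/
noncomputable def starC' {V : Type*} [Fintype V] [DecidableEq V]
    (u : V × V → ℤ) (x : V × V → ℚ) : Option V × Option V → WithTop ℚ
  | (some a, some a') =>
      if Odd (u (a, a')) then (((u (a, a') : ℚ) - x (a, a') : ℚ) : WithTop ℚ) else ⊤
  | _ => ⊤

/-- The terminal set `T`: odd-`b` vertices, plus the new vertex iff `∑ b` is odd. -/
noncomputable def starT {V : Type*} [Fintype V] [DecidableEq V] (b : V → ℤ) :
    Finset (Option V) :=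
  (Finset.univ.filter (fun a : V => Odd (b a))).image some ∪
    (if Odd (Finset.univ.sum b) then {(none : Option V)} else ∅)

/-- Left-hand side of the rewritten blossom inequality \eqref{eq:oddcut}:
`∑_{a∈W} s_a + ∑_{e∈δ(W)∖F'} x_e + ∑_{f∈F'} (u_f − x_f)`. -/
noncomputable def oddcutLHS {V : Type*} [Fintype V] [DecidableEq V]
    (E : Finset (V × V)) (b : V → ℤ) (u : V × V → ℤ) (x : V × V → ℚ)
    (W : Finset V) (F' : Finset (V × V)) : ℚ :=
  W.sum (fun i => (b i : ℚ) - (incEdges E i).sum x) +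
    (cutEdges E W \ F').sum x + F'.sum (fun f => (u f : ℚ) - x f)

/-- The edge set `F'` of `G` associated with a blossom `(U,F)` of `G*`: the
(odd-capacity) edges of `F`, together with the even-capacity edges crossing `U` for
which `u_e − x_e` is the cheaper of the two choices. -/
noncomputable def assocF {V : Type*} [Fintype V] [DecidableEq V]
    (E : Finset (V × V)) (u : V × V → ℤ) (x : V × V → ℚ)
    (U : Finset (Option V)) (F : Finset (Option V × Option V)) : Finset (V × V) :=
  E.filter (fun e => ((some e.1 : Option V), (some e.2 : Option V)) ∈ F ∨
    (((some e.1 : Option V), (some e.2 : Option V)) ∈ cutEdges (starEdges E) U ∧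
      ¬ Odd (u e) ∧ (u e : ℚ) - x e < x e))

/-- The value `β(U,F)` of a blossom of `G*`. -/
noncomputable def starBeta {V : Type*} [Fintype V] [DecidableEq V]
    (E : Finset (V × V)) (b : V → ℤ) (u : V × V → ℤ) (x : V × V → ℚ)
    (U : Finset (Option V)) (F : Finset (Option V × Option V)) : WithTop ℚ :=
  (cutEdges (starEdges E) U \ F).sum (starC E b u x) + F.sum (starC' u x)

set_option linter.unusedSectionVars false
set_option linter.unusedVariables false

section Aux
variable {V : Type*} [Fintype V] [DecidableEq V]

def emb : V × V → Option V × Option V := fun e => (some e.1, some e.2)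

lemma emb_inj : Function.Injective (emb (V := V)) := by
  rintro ⟨a, b⟩ ⟨c, d⟩ h
  simp [emb, Prod.ext_iff] at h ⊢
  exact h

lemma mem_starEdges_emb (E : Finset (V × V)) (e : V × V) :
    emb e ∈ starEdges E ↔ e ∈ E := by
  simp only [starEdges, Finset.mem_union, Finset.mem_image, emb, Prod.ext_iff]
  constructor
  · rintro (⟨a, ha, h1, h2⟩ | ⟨a, _, _, h2⟩)
    · obtain ⟨rfl⟩ : a = e := Prod.ext (Option.some_injective _ h1) (Option.some_injective _ h2)
      exact ha
    · simp at h2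
  · intro he; exact Or.inl ⟨e, he, rfl, rfl⟩

lemma slack_mem_starEdges (E : Finset (V × V)) (a : V) :
    ((some a : Option V), (none : Option V)) ∈ starEdges E := by
  simp [starEdges]

lemma mem_starEdges_elim {E : Finset (V × V)} {p : Option V × Option V}
    (hp : p ∈ starEdges E) :
    (∃ e ∈ E, p = emb e) ∨ ∃ a : V, p = (some a, none) := by
  simp only [starEdges, Finset.mem_union, Finset.mem_image] at hp
  rcases hp with ⟨e, he, rfl⟩ | ⟨a, _, rfl⟩
  · exact Or.inl ⟨e, he, rfl⟩
  · exact Or.inr ⟨a, rfl⟩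

lemma emb_mem_cut_iff {E : Finset (V × V)} {U : Finset (Option V)} {e : V × V} :
    emb e ∈ cutEdges (starEdges E) U ↔
      e ∈ cutEdges E (Finset.univ.filter (fun a : V => some a ∈ U)) := by
  have := mem_starEdges_emb E e
  simp only [emb] at this
  simp only [cutEdges, Finset.mem_filter, emb, Finset.mem_univ, true_and, this]

lemma slack_mem_cut_iff {E : Finset (V × V)} {U : Finset (Option V)} (hU : (none : Option V) ∉ U)
    (a : V) :
    ((some a : Option V), (none : Option V)) ∈ cutEdges (starEdges E) U ↔ some a ∈ U := by
  simp [cutEdges, slack_mem_starEdges, hU]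

lemma cut_star_eq (E : Finset (V × V)) {U : Finset (Option V)} (hU : (none : Option V) ∉ U) :
    cutEdges (starEdges E) U =
      (cutEdges E (Finset.univ.filter (fun a : V => some a ∈ U))).image emb ∪
        (Finset.univ.filter (fun a : V => some a ∈ U)).image
          (fun a : V => ((some a : Option V), (none : Option V))) := by
  ext p
  constructor
  · intro hp
    have hp' := hp
    simp only [cutEdges, Finset.mem_filter] at hp'
    rcases mem_starEdges_elim hp'.1 with ⟨e, he, rfl⟩ | ⟨a, rfl⟩
    · exact Finset.mem_union_left _ (Finset.mem_image_of_mem _ (emb_mem_cut_iff.mp hp))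
    · refine Finset.mem_union_right _ ?_
      refine Finset.mem_image.mpr ⟨a, ?_, rfl⟩
      simp [(slack_mem_cut_iff hU a).mp hp]
  · intro hp
    rcases Finset.mem_union.mp hp with hp | hp
    · obtain ⟨e, he, rfl⟩ := Finset.mem_image.mp hp
      exact emb_mem_cut_iff.mpr he
    · obtain ⟨a, ha, rfl⟩ := Finset.mem_image.mp hp
      simp only [Finset.mem_filter, Finset.mem_univ, true_and] at ha
      exact (slack_mem_cut_iff hU a).mpr ha

lemma cut_star_disjoint (E : Finset (V × V)) (W : Finset V) (s : Finset (V × V)) :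
    Disjoint (s.image (emb (V := V)))
      (W.image (fun a : V => ((some a : Option V), (none : Option V)))) := by
  rw [Finset.disjoint_left]
  rintro p hp hq
  obtain ⟨e, _, rfl⟩ := Finset.mem_image.mp hp
  obtain ⟨a, _, h⟩ := Finset.mem_image.mp hq
  simp [emb, Prod.ext_iff] at h

lemma odd_sum_iff {α : Type*} [DecidableEq α] (s : Finset α) (g : α → ℤ) :
    Odd (s.sum g) ↔ Odd ((s.filter (fun a => Odd (g a))).card) := by
  classical
  induction s using Finset.induction_on with
  | empty => simp
  | insert _ _ h ih =>
    rename_i a s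
    rw [Finset.sum_insert h, Finset.filter_insert]
    have heta : (∑ x ∈ s, g x) = s.sum g := rfl
    by_cases hg : Odd (g a)
    · rw [if_pos hg, Finset.card_insert_of_notMem (by simp [h]), heta]
      simp only [Int.odd_iff, Nat.odd_iff] at hg ih ⊢
      omega
    · rw [if_neg hg, heta]
      simp only [Int.odd_iff, Nat.odd_iff, Int.not_odd_iff_even, Int.even_iff] at hg ih ⊢
      omega

lemma starC_emb (E : Finset (V × V)) (b : V → ℤ) (u : V × V → ℤ) (x : V × V → ℚ)
    (e : V × V) :
    starC E b u x (emb e) =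
      ((if Odd (u e) then x e else min (x e) ((u e : ℚ) - x e) : ℚ) : WithTop ℚ) := by
  obtain ⟨a, a'⟩ := e
  by_cases h : Odd (u (a, a')) <;> simp [starC, emb, h]

lemma starC_slack (E : Finset (V × V)) (b : V → ℤ) (u : V × V → ℤ) (x : V × V → ℚ)
    (a : V) :
    starC E b u x (some a, none) = (((b a : ℚ) - (incEdges E a).sum x : ℚ) : WithTop ℚ) :=
  rfl

lemma starC'_emb (u : V × V → ℤ) (x : V × V → ℚ) {e : V × V} (h : Odd (u e)) :
    starC' u x (emb e) = (((u e : ℚ) - x e : ℚ) : WithTop ℚ) := by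
  obtain ⟨a, a'⟩ := e
  simp [starC', emb, h]

lemma slack_inj : Function.Injective (fun a : V => ((some a : Option V), (none : Option V))) := by
  intro a b h
  simpa [Prod.ext_iff] using h

lemma starBeta_eq (E : Finset (V × V)) (b : V → ℤ) (u : V × V → ℤ) (x : V × V → ℚ)
    {U : Finset (Option V)} (hU : (none : Option V) ∉ U)
    {F₀ : Finset (V × V)}
    (hF₀cut : F₀ ⊆ cutEdges E (Finset.univ.filter (fun a : V => some a ∈ U)))
    (hodd : ∀ e ∈ F₀, Odd (u e)) :
    starBeta E b u x U (F₀.image emb) =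
      (((Finset.univ.filter (fun a : V => some a ∈ U)).sum
            (fun i => (b i : ℚ) - (incEdges E i).sum x) +
          (cutEdges E (Finset.univ.filter (fun a : V => some a ∈ U)) \ F₀).sum
            (fun e => if Odd (u e) then x e else min (x e) ((u e : ℚ) - x e)) +
          F₀.sum (fun e => (u e : ℚ) - x e) : ℚ) : WithTop ℚ) := by
  set W := Finset.univ.filter (fun a : V => some a ∈ U) with hW
  have hsd : cutEdges (starEdges E) U \ F₀.image emb =
      (cutEdges E W \ F₀).image emb ∪
        W.image (fun a : V => ((some a : Option V), (none : Option V))) := by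
    rw [cut_star_eq E hU, ← hW, Finset.union_sdiff_distrib,
      ← Finset.image_sdiff _ _ emb_inj,
      Finset.sdiff_eq_self_of_disjoint ((cut_star_disjoint E W F₀).symm)]
  rw [starBeta, hsd, Finset.sum_union (cut_star_disjoint E W _),
    Finset.sum_image (fun a _ b _ h => emb_inj h),
    Finset.sum_image (fun a _ b _ h => slack_inj h),
    Finset.sum_image (fun a _ b _ h => emb_inj h)]
  rw [Finset.sum_congr rfl (fun e _ => starC_emb E b u x e),
    Finset.sum_congr rfl (fun a _ => starC_slack E b u x a),
    Finset.sum_congr rfl (fun e he => starC'_emb u x (hodd e he))]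
  rw [← WithTop.coe_sum, ← WithTop.coe_sum, ← WithTop.coe_sum]
  norm_cast
  ring

lemma starC'_emb_ne_top {u : V × V → ℤ} {x : V × V → ℚ} {e : V × V}
    (h : starC' u x (emb e) ≠ ⊤) : Odd (u e) := by
  obtain ⟨a, a'⟩ := e
  by_cases ho : Odd (u (a, a'))
  · exact ho
  · exact absurd (by simp [starC', emb, ho]) h

lemma starC'_slack_eq_top (u : V × V → ℤ) (x : V × V → ℚ) (a : V) :
    starC' u x ((some a : Option V), (none : Option V)) = ⊤ := rfl

lemma starT_inter {b : V → ℤ} {U : Finset (Option V)} (hU : (none : Option V) ∉ U) :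
    starT b ∩ U =
      ((Finset.univ.filter (fun a : V => some a ∈ U)).filter
        (fun a : V => Odd (b a))).image some := by
  ext o
  rcases o with _ | a
  · simp only [Finset.mem_inter, Finset.mem_image]
    constructor
    · rintro ⟨-, h⟩; exact absurd h hU
    · rintro ⟨a, -, h⟩; exact absurd h (by simp)
  · simp only [starT, Finset.mem_inter, Finset.mem_union, Finset.mem_image,
      Finset.mem_filter, Finset.mem_univ, true_and, Option.some.injEq]
    constructor
    · rintro ⟨h1 | h2, hmem⟩
      · obtain ⟨a', ha', rfl⟩ := h1
        exact ⟨a', ⟨⟨hmem, ha'⟩, rfl⟩⟩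
      · split_ifs at h2 <;> simp at h2
    · rintro ⟨a', ⟨⟨hm, ho⟩, rfl⟩⟩
      exact ⟨Or.inl ⟨a', ho, rfl⟩, hm⟩

lemma assocF_eq (E : Finset (V × V)) (u : V × V → ℤ) (x : V × V → ℚ)
    (U : Finset (Option V)) (F : Finset (Option V × Option V)) :
    assocF E u x U F =
      E.filter (fun e => emb e ∈ F) ∪
        (cutEdges E (Finset.univ.filter (fun a : V => some a ∈ U))).filter
          (fun e => ¬ Odd (u e) ∧ (u e : ℚ) - x e < x e) := by
  ext e
  have h := (emb_mem_cut_iff (E := E) (U := U) (e := e))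
  have hEW : e ∈ cutEdges E (Finset.univ.filter (fun a : V => some a ∈ U)) → e ∈ E :=
    fun hh => (Finset.mem_filter.mp hh).1
  simp only [assocF, Finset.mem_filter, Finset.mem_union,
    show ((some e.1 : Option V), (some e.2 : Option V)) = emb e from rfl, h]
  tauto

end Aux

/-- Reduction of blossom separation to blossom minimization on `G*`: every blossom
`(U,F)` of `G*` avoiding the new vertex and of finite value corresponds, via
`W := U ∩ V` and `F' := assocF`, to an inequality `oddcutLHS ≥ 1` of the required
parity whose left-hand side equals `β(U,F)` (so it is violated by exactly
`1 − β(U,F)`); conversely, every violated inequality of this form yields a blossom of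
`G*` of value less than `1`. -/
theorem stmt_15 {V : Type*} [Fintype V] [DecidableEq V]
    (E : Finset (V × V)) (hloop : ∀ e ∈ E, e.1 ≠ e.2)
    (b : V → ℤ) (hb : ∀ i, 0 ≤ b i) (u : V × V → ℤ) (hu : ∀ e, 0 ≤ u e)
    (x : V × V → ℚ) (hx0 : ∀ e, 0 ≤ x e) (hxu : ∀ e, x e ≤ (u e : ℚ))
    (hdeg : ∀ i : V, (incEdges E i).sum x ≤ (b i : ℚ)) :
    (∀ U : Finset (Option V), (none : Option V) ∉ U →
      ∀ F ⊆ cutEdges (starEdges E) U, Odd ((starT b ∩ U).card + F.card) →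
        starBeta E b u x U F < ⊤ →
          assocF E u x U F ⊆ cutEdges E (Finset.univ.filter (fun a : V => some a ∈ U)) ∧
          Odd ((Finset.univ.filter (fun a : V => some a ∈ U)).sum b +
            (assocF E u x U F).sum u) ∧
          ((oddcutLHS E b u x (Finset.univ.filter (fun a : V => some a ∈ U))
              (assocF E u x U F) : ℚ) : WithTop ℚ) = starBeta E b u x U F) ∧
    (∀ W : Finset V, ∀ F' ⊆ cutEdges E W, Odd (W.sum b + F'.sum u) →
      oddcutLHS E b u x W F' < 1 →
        ∃ U : Finset (Option V), (none : Option V) ∉ U ∧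
          ∃ F ⊆ cutEdges (starEdges E) U, Odd ((starT b ∩ U).card + F.card) ∧
            starBeta E b u x U F < 1) := by
  constructor
  · -- Part 1
    intro U hU F hFsub hpar hfin
    set W := Finset.univ.filter (fun a : V => some a ∈ U) with hW
    -- finiteness facts
    have hfin' : F.sum (starC' u x) ≠ ⊤ := by
      intro h
      rw [starBeta, h, add_top] at hfin
      exact (lt_irrefl _) hfin
    have hmem : ∀ f ∈ F, starC' u x f ≠ ⊤ := by
      intro f hf h
      exact hfin' (WithTop.sum_eq_top.mpr ⟨f, hf, h⟩)
    set F₀ := E.filter (fun e => emb e ∈ F) with hF₀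
    have hF₀F : ∀ e ∈ F₀, emb e ∈ F := fun e he => (Finset.mem_filter.mp he).2
    have hodd : ∀ e ∈ F₀, Odd (u e) := fun e he =>
      starC'_emb_ne_top (hmem _ (hF₀F e he))
    have hFeq : F = F₀.image emb := by
      ext f
      constructor
      · intro hf
        have hfs : f ∈ starEdges E := (Finset.mem_filter.mp (hFsub hf)).1
        rcases mem_starEdges_elim hfs with ⟨e, he, rfl⟩ | ⟨a, rfl⟩
        · exact Finset.mem_image_of_mem _ (Finset.mem_filter.mpr ⟨he, hf⟩)
        · exact absurd (starC'_slack_eq_top u x a) (hmem _ hf)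
      · intro hf
        obtain ⟨e, he, rfl⟩ := Finset.mem_image.mp hf
        exact hF₀F e he
    have hF₀cut : F₀ ⊆ cutEdges E W := by
      intro e he
      exact emb_mem_cut_iff.mp (hFsub (hF₀F e he))
    set Ev := (cutEdges E W).filter (fun e => ¬ Odd (u e) ∧ (u e : ℚ) - x e < x e) with hEv
    have hAF : assocF E u x U F = F₀ ∪ Ev := assocF_eq E u x U F
    have hEvE : ∀ e ∈ Ev, ¬ Odd (u e) ∧ (u e : ℚ) - x e < x e :=
      fun e he => (Finset.mem_filter.mp he).2
    have hEvcut : Ev ⊆ cutEdges E W := Finset.filter_subset _ _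
    have hdisj : Disjoint F₀ Ev := by
      rw [Finset.disjoint_left]
      intro e heF heE
      exact (hEvE e heE).1 (hodd e heF)
    have hEvsd : Ev ⊆ cutEdges E W \ F₀ := by
      intro e he
      exact Finset.mem_sdiff.mpr ⟨hEvcut he, fun hc => (hEvE e he).1 (hodd e hc)⟩
    refine ⟨?_, ?_, ?_⟩
    · rw [hAF]
      exact Finset.union_subset hF₀cut hEvcut
    · -- parity
      have c1 : (starT b ∩ U).card = (W.filter (fun a => Odd (b a))).card := by
        rw [starT_inter hU]
        exact Finset.card_image_of_injective _ (Option.some_injective V)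
      have c2 : F.card = F₀.card := by
        rw [hFeq]
        exact Finset.card_image_of_injective _ emb_inj
      have hfil : (assocF E u x U F).filter (fun e => Odd (u e)) = F₀ := by
        rw [hAF, Finset.filter_union, Finset.filter_true_of_mem hodd,
          Finset.filter_false_of_mem (fun e he => (hEvE e he).1), Finset.union_empty]
      have h1 := odd_sum_iff W b
      have h2 := odd_sum_iff (assocF E u x U F) u
      rw [hfil] at h2
      rw [c1, c2, Nat.odd_iff] at hpar
      rw [Int.odd_iff] at h1 h2
      rw [Nat.odd_iff] at h1 h2
      rw [Int.odd_iff, Int.add_emod]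
      omega
    · -- value
      have hrhs := starBeta_eq E b u x hU (hW ▸ hF₀cut) hodd
      rw [← hW] at hrhs
      rw [hFeq] at hAF
      rw [hFeq, hrhs, WithTop.coe_eq_coe, oddcutLHS, hAF]
      have hsd2 : cutEdges E W \ (F₀ ∪ Ev) = (cutEdges E W \ F₀) \ Ev := by
        ext e; simp only [Finset.mem_sdiff, Finset.mem_union]; tauto
      rw [hsd2, Finset.sum_union hdisj, ← Finset.sum_sdiff hEvsd
        (f := fun e => if Odd (u e) then x e else min (x e) ((u e : ℚ) - x e))]
      have e1 : ((cutEdges E W \ F₀) \ Ev).sum x =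
          ((cutEdges E W \ F₀) \ Ev).sum
            (fun e => if Odd (u e) then x e else min (x e) ((u e : ℚ) - x e)) := by
        refine Finset.sum_congr rfl (fun e he => ?_)
        simp only [Finset.mem_sdiff] at he
        by_cases ho : Odd (u e)
        · rw [if_pos ho]
        · rw [if_neg ho]
          have hnot : ¬ ((u e : ℚ) - x e < x e) := by
            intro hc
            exact he.2 (Finset.mem_filter.mpr ⟨he.1.1, ho, hc⟩)
          rw [min_eq_left (le_of_not_gt hnot)]
      have e2 : Ev.sum (fun e => (u e : ℚ) - x e) =
          Ev.sum (fun e => if Odd (u e) then x e else min (x e) ((u e : ℚ) - x e)) := by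
        refine Finset.sum_congr rfl (fun e he => ?_)
        rw [if_neg (hEvE e he).1, min_eq_right (le_of_lt (hEvE e he).2)]
      rw [e1, e2]
      ring
  · -- Part 2
    intro W F' hF'sub hpar hlt
    set U := W.image some with hUdef
    have hU : (none : Option V) ∉ U := by simp [hUdef]
    have hWU : Finset.univ.filter (fun a : V => some a ∈ U) = W := by
      ext a; simp [hUdef]
    set F₀ := F'.filter (fun e => Odd (u e)) with hF₀
    have hF₀sub : F₀ ⊆ F' := Finset.filter_subset _ _
    have hodd : ∀ e ∈ F₀, Odd (u e) := fun e he => (Finset.mem_filter.mp he).2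
    have hF₀cut : F₀ ⊆ cutEdges E (Finset.univ.filter (fun a : V => some a ∈ U)) := by
      rw [hWU]; exact hF₀sub.trans hF'sub
    refine ⟨U, hU, F₀.image emb, ?_, ?_, ?_⟩
    · intro f hf
      obtain ⟨e, he, rfl⟩ := Finset.mem_image.mp hf
      exact emb_mem_cut_iff.mpr (hF₀cut he)
    · -- parity
      have c1 : (starT b ∩ U).card = (W.filter (fun a => Odd (b a))).card := by
        rw [starT_inter hU, hWU]
        exact Finset.card_image_of_injective _ (Option.some_injective V)
      have c2 : (F₀.image emb).card = F₀.card :=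
        Finset.card_image_of_injective _ emb_inj
      have h1 := odd_sum_iff W b
      have h2 := odd_sum_iff F' u
      rw [← hF₀] at h2
      rw [Int.odd_iff, Int.add_emod] at hpar
      rw [Int.odd_iff, Nat.odd_iff] at h1 h2
      rw [c1, c2, Nat.odd_iff]
      omega
    · -- bound
      rw [starBeta_eq E b u x hU hF₀cut hodd, hWU]
      have key : (W.sum (fun i => (b i : ℚ) - (incEdges E i).sum x) +
          (cutEdges E W \ F₀).sum
            (fun e => if Odd (u e) then x e else min (x e) ((u e : ℚ) - x e)) +
          F₀.sum (fun e => (u e : ℚ) - x e)) ≤ oddcutLHS E b u x W F' := by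
        rw [oddcutLHS]
        have hsplit : cutEdges E W \ F₀ = (cutEdges E W \ F') ∪ (F' \ F₀) := by
          ext e
          simp only [Finset.mem_sdiff, Finset.mem_union]
          have hsub : e ∈ F' → e ∈ cutEdges E W := fun h => hF'sub h
          have hsub2 : e ∈ F₀ → e ∈ F' := fun h => hF₀sub h
          tauto
        have hdisj2 : Disjoint (cutEdges E W \ F') (F' \ F₀) := by
          rw [Finset.disjoint_left]
          intro e h1 h2
          exact (Finset.mem_sdiff.mp h1).2 (Finset.mem_sdiff.mp h2).1
        rw [hsplit, Finset.sum_union hdisj2,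
          ← Finset.sum_sdiff hF₀sub (f := fun e => (u e : ℚ) - x e)]
        have b1 : (cutEdges E W \ F').sum
            (fun e => if Odd (u e) then x e else min (x e) ((u e : ℚ) - x e)) ≤
            (cutEdges E W \ F').sum x := by
          refine Finset.sum_le_sum (fun e _ => ?_)
          by_cases ho : Odd (u e)
          · rw [if_pos ho]
          · rw [if_neg ho]; exact min_le_left _ _
        have b2 : (F' \ F₀).sum
            (fun e => if Odd (u e) then x e else min (x e) ((u e : ℚ) - x e)) ≤
            (F' \ F₀).sum (fun e => (u e : ℚ) - x e) := by
          refine Finset.sum_le_sum (fun e he => ?_)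
          have hne : ¬ Odd (u e) := by
            intro ho
            obtain ⟨h1, h2⟩ := Finset.mem_sdiff.mp he
            exact h2 (Finset.mem_filter.mpr ⟨h1, ho⟩)
          rw [if_neg hne]; exact min_le_right _ _
        linarith
      have : (W.sum (fun i => (b i : ℚ) - (incEdges E i).sum x) +
          (cutEdges E W \ F₀).sum
            (fun e => if Odd (u e) then x e else min (x e) ((u e : ℚ) - x e)) +
          F₀.sum (fun e => (u e : ℚ) - x e)) < 1 := lt_of_le_of_lt key hlt
      exact_mod_cast this
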